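/- Let g be a real-linear symplectic automorphism of the complex Hilbert space V with complex-linear part C_g = (g − JgJ)/2 and antilinear part A_g = (g + JgJ)/2. Then C_g is invertible, and the antilinear operator Z_g = C_g⁻¹A_g is symmetric (⟨y|Z_g x⟩ = ⟨x|Z_g y⟩ for all x, y) with operator norm strictly less than 1. -/

import Mathlib

open scoped ComplexConjugate

noncomputable section

section Defs

variable {V W A : Type} [AddCommGroup V] [Module ℂ V] [CommRing A] [Algebra ℂ A]

/-- `A` (with embedding `ι`) is the symmetric algebra of `V`: universal property. -/
def IsSymmAlg (ι : V →ₗ[ℂ] A) : Prop :=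
  ∀ (B : Type) [CommRing B] [Algebra ℂ B] (f : V →ₗ[ℂ] B),
    ∃! F : A →ₐ[ℂ] B, ∀ v, F (ι v) = f v

/-- The span of `n`-fold products of generators: the degree-`n` part. -/
def GradeOf (gen : W → A) (n : ℕ) : Submodule ℂ A :=
  Submodule.span ℂ {a | ∃ f : Fin n → W, a = ∏ i, gen (f i)}

/-- The algebra is spanned by products of generators. -/
def SpanProdsOf (gen : W → A) : Prop :=
  ∀ x : A, x ∈ Submodule.span ℂ {a | ∃ (n : ℕ) (f : Fin n → W), a = ∏ i, gen (f i)}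

/-- A quadratic: an antilinear functional concentrated in degree 2. -/
def IsQuadOf (gen : W → A) (ζ : A →ₗ⋆[ℂ] ℂ) : Prop :=
  ∀ n : ℕ, n ≠ 2 → ∀ φ ∈ GradeOf gen n, ζ φ = 0

/-- The commutative product on the full antidual induced by the coproduct,
characterized on products of generators. -/
def IsConvProdOf (gen : W → A)
    (mul : (A →ₗ⋆[ℂ] ℂ) → (A →ₗ⋆[ℂ] ℂ) → (A →ₗ⋆[ℂ] ℂ)) : Prop :=
  ∀ (Φ Ψ : A →ₗ⋆[ℂ] ℂ) (n : ℕ) (v : Fin n → W),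
    mul Φ Ψ (∏ i, gen (v i)) =
      ∑ S : Finset (Fin n), Φ (∏ i ∈ S, gen (v i)) * Ψ (∏ i ∈ Sᶜ, gen (v i))

/-- The counit (unit of the antidual algebra): kills products of at least one generator. -/
def IsCounitOf (gen : W → A) (ε : A →ₗ⋆[ℂ] ℂ) : Prop :=
  ∀ (n : ℕ) (v : Fin n → W), ε (∏ i, gen (v i)) = if n = 0 then 1 else 0

/-- Powers of a functional with respect to the convolution product. -/
def powD (mul : (A →ₗ⋆[ℂ] ℂ) → (A →ₗ⋆[ℂ] ℂ) → (A →ₗ⋆[ℂ] ℂ))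
    (ε ζ : A →ₗ⋆[ℂ] ℂ) : ℕ → (A →ₗ⋆[ℂ] ℂ)
  | 0 => ε
  | n + 1 => mul ζ (powD mul ε ζ n)

/-- `E` is the Gaussian `exp ζ = Σ ζⁿ/n!` (a finite sum in each degree). -/
def IsGaussianOf (gen : W → A)
    (mul : (A →ₗ⋆[ℂ] ℂ) → (A →ₗ⋆[ℂ] ℂ) → (A →ₗ⋆[ℂ] ℂ))
    (ε ζ E : A →ₗ⋆[ℂ] ℂ) : Prop :=
  ∀ k : ℕ, ∀ ψ ∈ GradeOf gen k,
    E ψ = ∑ n ∈ Finset.range (k + 1), ((n.factorial : ℂ))⁻¹ * powD mul ε ζ n ψ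

end Defs

section Defs2

variable {V A : Type} [NormedAddCommGroup V] [InnerProductSpace ℂ V]
  [CommRing A] [Algebra ℂ A]

/-- The family of annihilation operators: derivations killing `1` with
`a v (ι w) = ⟨v|w⟩ 1`. -/
def IsAnn (ι : V →ₗ[ℂ] A) (a : V → A →ₗ[ℂ] A) : Prop :=
  ∀ v : V, (∀ x y : A, a v (x * y) = a v x * y + x * a v y) ∧
    a v 1 = 0 ∧ ∀ w : V, a v (ι w) = (inner ℂ v w : ℂ) • (1 : A)

/-- The canonical inner product on the symmetric algebra: graded pieces are
orthogonal and the permanent formula holds. (Antilinear in the first slot.) -/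
def IsCanonInner (ι : V →ₗ[ℂ] A) (Bf : A →ₗ⋆[ℂ] A →ₗ[ℂ] ℂ) : Prop :=
  (∀ (k n : ℕ), k ≠ n → ∀ (x : Fin k → V) (y : Fin n → V),
      Bf (∏ i, ι (x i)) (∏ i, ι (y i)) = 0) ∧
  ∀ (n : ℕ) (x y : Fin n → V),
      Bf (∏ i, ι (x i)) (∏ i, ι (y i)) =
        ∑ p : Equiv.Perm (Fin n), ∏ i, (inner ℂ (x i) (y (p i)) : ℂ)

/-- Iterated annihilation `a(vₙ)⋯a(v₁)φ` (applying `a(v₁)` first). -/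
def iterAnn (a : V → A →ₗ[ℂ] A) : (n : ℕ) → (Fin n → V) → A → A
  | 0, _, φ => φ
  | n + 1, v, φ => a (v (Fin.last n)) (iterAnn a n (fun i => v i.castSucc) φ)

/-- A symmetric bi-antilinear map `V × V → ℂ`. -/
def IsSymAnti (Z : V → V → ℂ) : Prop :=
  (∀ x y, Z x y = Z y x) ∧
  (∀ x y y', Z x (y + y') = Z x y + Z x y') ∧
  (∀ (c : ℂ) (x y : V), Z x (c • y) = conj c * Z x y)

end Defs2

set_option linter.unusedSectionVars false

section SympAuxSec

namespace SympAux
variable {V : Type} [NormedAddCommGroup V] [InnerProductSpace ℂ V]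

def Cm (h : V ≃L[ℝ] V) (x : V) : V := (2:ℝ)⁻¹ • (h x - Complex.I • h (Complex.I • x))
def Am (h : V ≃L[ℝ] V) (x : V) : V := (2:ℝ)⁻¹ • (h x + Complex.I • h (Complex.I • x))

lemma II_smul (x : V) : Complex.I • Complex.I • x = -x := by
  rw [smul_smul, Complex.I_mul_I, neg_one_smul]

lemma sumCA (h : V ≃L[ℝ] V) (x : V) : Cm h x + Am h x = h x := by
  simp [Cm, Am, smul_sub, smul_add]; module

lemma Cm_I (h : V ≃L[ℝ] V) (x : V) : Cm h (Complex.I • x) = Complex.I • Cm h x := by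
  rw [Cm, Cm, II_smul, map_neg, smul_neg, sub_neg_eq_add, smul_comm Complex.I ((2:ℝ)⁻¹),
    smul_sub, II_smul, sub_neg_eq_add, add_comm]

lemma Am_I (h : V ≃L[ℝ] V) (x : V) : Am h (Complex.I • x) = -(Complex.I • Am h x) := by
  rw [Am, Am, II_smul, map_neg, smul_neg, smul_comm Complex.I ((2:ℝ)⁻¹)]
  have : Complex.I • (h x + Complex.I • h (Complex.I • x))
      = Complex.I • h x - h (Complex.I • x) := by
    rw [smul_add, II_smul, ← sub_eq_add_neg]
  rw [this]; module

lemma Cm_add (h : V ≃L[ℝ] V) (x y : V) : Cm h (x + y) = Cm h x + Cm h y := by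
  simp [Cm, smul_add, map_add]; module

lemma Am_add (h : V ≃L[ℝ] V) (x y : V) : Am h (x + y) = Am h x + Am h y := by
  simp [Am, smul_add, map_add]; module

lemma Cm_rsmul (h : V ≃L[ℝ] V) (r : ℝ) (x : V) : Cm h (r • x) = r • Cm h x := by
  have : Complex.I • r • x = r • Complex.I • x := smul_comm _ _ _
  simp [Cm, this, map_smul]; module

lemma Am_rsmul (h : V ≃L[ℝ] V) (r : ℝ) (x : V) : Am h (r • x) = r • Am h x := by
  have : Complex.I • r • x = r • Complex.I • x := smul_comm _ _ _
  simp [Am, this, map_smul]; module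

lemma csmul_decomp (c : ℂ) (x : V) : c • x = c.re • x + c.im • (Complex.I • x) := by
  conv_lhs => rw [← Complex.re_add_im c]
  rw [add_smul, mul_smul, Complex.coe_smul, Complex.coe_smul]

lemma Cm_csmul (h : V ≃L[ℝ] V) (c : ℂ) (x : V) : Cm h (c • x) = c • Cm h x := by
  rw [csmul_decomp c x, Cm_add, Cm_rsmul, Cm_rsmul, Cm_I]
  rw [csmul_decomp c (Cm h x)]

lemma Am_csmul (h : V ≃L[ℝ] V) (c : ℂ) (x : V) : Am h (c • x) = (conj c) • Am h x := by
  rw [csmul_decomp c x, Am_add, Am_rsmul, Am_rsmul, Am_I]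
  have hc : conj c = ((c.re:ℂ) - (c.im:ℂ) * Complex.I) := by apply Complex.ext <;> simp
  rw [hc, sub_smul, mul_smul, Complex.coe_smul, Complex.coe_smul, smul_neg, sub_eq_add_neg]

local notation "⟪" x ", " y "⟫" => @inner ℂ _ _ x y

lemma inner_Il (u v : V) : ⟪Complex.I • u, v⟫ = -(Complex.I * ⟪u,v⟫) := by
  rw [inner_smul_left]; simp [Complex.conj_I]

lemma inner_Ir (u v : V) : ⟪u, Complex.I • v⟫ = Complex.I * ⟪u,v⟫ := by
  rw [inner_smul_right]

lemma inner_II (u v : V) : ⟪Complex.I • u, Complex.I • v⟫ = ⟪u,v⟫ := by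
  rw [inner_smul_left, inner_smul_right]; simp [Complex.conj_I]; ring_nf
  simp [Complex.I_sq]

variable (h : V ≃L[ℝ] V)

lemma key0 (x y : V) : ⟪h x, h y⟫ =
    ⟪Cm h x, Cm h y⟫ + ⟪Cm h x, Am h y⟫ + ⟪Am h x, Cm h y⟫ + ⟪Am h x, Am h y⟫ := by
  rw [← sumCA h x, ← sumCA h y, inner_add_left, inner_add_right, inner_add_right]; ring

lemma key1 (x y : V) : ⟪h (Complex.I • x), h (Complex.I • y)⟫ =
    ⟪Cm h x, Cm h y⟫ - ⟪Cm h x, Am h y⟫ - ⟪Am h x, Cm h y⟫ + ⟪Am h x, Am h y⟫ := by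
  rw [← sumCA h (Complex.I • x), ← sumCA h (Complex.I • y), Cm_I, Am_I, Cm_I, Am_I,
    inner_add_left, inner_add_right, inner_add_right, inner_neg_left, inner_neg_right,
    inner_neg_left, inner_neg_right, inner_II, inner_II, inner_II, inner_II]
  ring

lemma key2 (x y : V) : ⟪h (Complex.I • x), h y⟫ =
    Complex.I * (- ⟪Cm h x, Cm h y⟫ - ⟪Cm h x, Am h y⟫ + ⟪Am h x, Cm h y⟫ + ⟪Am h x, Am h y⟫) := by
  rw [← sumCA h (Complex.I • x), ← sumCA h y, Cm_I, Am_I]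
  simp only [inner_add_left, inner_add_right, inner_neg_left, inner_neg_right, inner_Il, inner_Ir]
  ring

lemma key3 (x y : V) : ⟪h x, h (Complex.I • y)⟫ =
    Complex.I * (⟪Cm h x, Cm h y⟫ - ⟪Cm h x, Am h y⟫ + ⟪Am h x, Cm h y⟫ - ⟪Am h x, Am h y⟫) := by
  rw [← sumCA h x, ← sumCA h (Complex.I • y), Cm_I, Am_I]
  simp only [inner_add_left, inner_add_right, inner_neg_left, inner_neg_right, inner_Il, inner_Ir]
  ring

variable {h} (symp : ∀ x y : V, (⟪h x, h y⟫).im = (⟪x, y⟫).im)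

include symp in
lemma star1 (x y : V) : ⟪Cm h x, Cm h y⟫ - conj ⟪Am h x, Am h y⟫ = ⟪x, y⟫ := by
  have e0 : (⟪Cm h x, Cm h y⟫ + ⟪Cm h x, Am h y⟫ + ⟪Am h x, Cm h y⟫ + ⟪Am h x, Am h y⟫).im
      = (⟪x, y⟫).im := by rw [← key0]; exact symp x y
  have e1 : (⟪Cm h x, Cm h y⟫ - ⟪Cm h x, Am h y⟫ - ⟪Am h x, Cm h y⟫ + ⟪Am h x, Am h y⟫).im
      = (⟪x, y⟫).im := by
    rw [← key1]; rw [symp (Complex.I • x) (Complex.I • y), inner_II]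
  have e2 : (Complex.I * (- ⟪Cm h x, Cm h y⟫ - ⟪Cm h x, Am h y⟫ + ⟪Am h x, Cm h y⟫ + ⟪Am h x, Am h y⟫)).im
      = -(⟪x, y⟫).re := by
    rw [← key2]; rw [symp (Complex.I • x) y, inner_Il]; simp
  have e3 : (Complex.I * (⟪Cm h x, Cm h y⟫ - ⟪Cm h x, Am h y⟫ + ⟪Am h x, Cm h y⟫ - ⟪Am h x, Am h y⟫)).im
      = (⟪x, y⟫).re := by
    rw [← key3]; rw [symp x (Complex.I • y), inner_Ir]; simp
  simp only [Complex.add_im, Complex.sub_im, Complex.mul_im, Complex.I_re, Complex.I_im,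
    Complex.neg_re, Complex.neg_im, Complex.add_re, Complex.sub_re, Complex.mul_re,
    zero_mul, one_mul, zero_add, zero_sub, mul_zero] at e0 e1 e2 e3
  apply Complex.ext <;>
    simp only [Complex.sub_re, Complex.sub_im, Complex.conj_re, Complex.conj_im] <;> linarith

include symp in
lemma star2 (x y : V) : ⟪Cm h x, Am h y⟫ = ⟪Cm h y, Am h x⟫ := by
  have e0 : (⟪Cm h x, Cm h y⟫ + ⟪Cm h x, Am h y⟫ + ⟪Am h x, Cm h y⟫ + ⟪Am h x, Am h y⟫).im
      = (⟪x, y⟫).im := by rw [← key0]; exact symp x y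
  have e1 : (⟪Cm h x, Cm h y⟫ - ⟪Cm h x, Am h y⟫ - ⟪Am h x, Cm h y⟫ + ⟪Am h x, Am h y⟫).im
      = (⟪x, y⟫).im := by
    rw [← key1]; rw [symp (Complex.I • x) (Complex.I • y), inner_II]
  have e2 : (Complex.I * (- ⟪Cm h x, Cm h y⟫ - ⟪Cm h x, Am h y⟫ + ⟪Am h x, Cm h y⟫ + ⟪Am h x, Am h y⟫)).im
      = -(⟪x, y⟫).re := by
    rw [← key2]; rw [symp (Complex.I • x) y, inner_Il]; simp
  have e3 : (Complex.I * (⟪Cm h x, Cm h y⟫ - ⟪Cm h x, Am h y⟫ + ⟪Am h x, Cm h y⟫ - ⟪Am h x, Am h y⟫)).im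
      = (⟪x, y⟫).re := by
    rw [← key3]; rw [symp x (Complex.I • y), inner_Ir]; simp
  have hsw : ⟪Cm h y, Am h x⟫ = conj ⟪Am h x, Cm h y⟫ := by
    rw [← inner_conj_symm]
  rw [hsw]
  simp only [Complex.add_im, Complex.sub_im, Complex.mul_im, Complex.I_re, Complex.I_im,
    Complex.neg_re, Complex.neg_im, Complex.add_re, Complex.sub_re, Complex.mul_re,
    zero_mul, one_mul, zero_add, zero_sub, mul_zero] at e0 e1 e2 e3
  apply Complex.ext <;>
    simp only [Complex.conj_re, Complex.conj_im] <;> linarith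


include symp in
lemma normCA (x : V) : ‖Cm h x‖ ^ 2 = ‖x‖ ^ 2 + ‖Am h x‖ ^ 2 := by
  have h1 := congrArg Complex.re (star1 symp x x)
  have e : ∀ u : V, (⟪u, u⟫ : ℂ).re = ‖u‖ ^ 2 := by
    intro u
    have := @inner_self_eq_norm_sq ℂ _ _ _ _ u
    simpa using this
  rw [Complex.sub_re, Complex.conj_re, e, e, e] at h1
  linarith

include symp in
lemma norm_le_Cm (x : V) : ‖x‖ ≤ ‖Cm h x‖ := by
  have h1 := normCA symp x
  nlinarith [norm_nonneg x, norm_nonneg (Cm h x), sq_nonneg ‖Am h x‖]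

include symp in
lemma symp_symm : ∀ x y : V, (⟪h.symm x, h.symm y⟫).im = (⟪x, y⟫).im := by
  intro x y
  have := symp (h.symm x) (h.symm y)
  simpa using this.symm

include symp in
lemma adjCm (x y : V) : ⟪Cm h.symm x, y⟫ = ⟪x, Cm h y⟫ := by
  have s1 : ∀ u v : V, (⟪h.symm u, v⟫).im = (⟪u, h v⟫).im := by
    intro u v
    have := symp (h.symm u) v
    simpa using this.symm
  have f1 : (⟪h.symm x, y⟫).im = (⟪x, h y⟫).im := s1 x y
  have f2 : (⟪h.symm x, y⟫).re = (⟪x, h (Complex.I • y)⟫).im := by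
    have e : (⟪h.symm x, Complex.I • y⟫).im = (⟪h.symm x, y⟫).re := by
      rw [inner_Ir]; simp
    rw [← e]; exact s1 x (Complex.I • y)
  have f3 : (⟪h.symm (Complex.I • x), y⟫).im = -(⟪x, h y⟫).re := by
    have := s1 (Complex.I • x) y
    rw [inner_Il] at this
    simpa using this
  have f4 : (⟪h.symm (Complex.I • x), y⟫).re = -(⟪x, h (Complex.I • y)⟫).re := by
    have := s1 (Complex.I • x) (Complex.I • y)
    rw [inner_Ir, inner_Il] at this
    simpa using this
  have hC2 : ∀ (k : V ≃L[ℝ] V) (u : V),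
      (2 : ℂ) • Cm k u = k u - Complex.I • k (Complex.I • u) := by
    intro k u
    rw [Cm, ← Complex.coe_smul, smul_smul]
    norm_num
  have lhs2 : (2 : ℂ) * ⟪Cm h.symm x, y⟫ = ⟪(2 : ℂ) • Cm h.symm x, y⟫ := by
    rw [inner_smul_left, Complex.conj_ofNat]
  have rhs2 : (2 : ℂ) * ⟪x, Cm h y⟫ = ⟪x, (2 : ℂ) • Cm h y⟫ := by
    rw [inner_smul_right]
  have hs : (2 : ℂ) * ⟪Cm h.symm x, y⟫ = (2 : ℂ) * ⟪x, Cm h y⟫ := by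
    rw [lhs2, rhs2, hC2 h.symm x, hC2 h y, inner_sub_left, inner_sub_right, inner_Il, inner_Ir]
    apply Complex.ext <;>
      simp only [Complex.sub_re, Complex.sub_im, Complex.neg_re, Complex.neg_im,
        Complex.mul_re, Complex.mul_im, Complex.I_re, Complex.I_im,
        zero_mul, one_mul, zero_add, zero_sub, mul_zero] <;>
      linarith
  exact mul_left_cancel₀ two_ne_zero hs


lemma Cm_neg (h : V ≃L[ℝ] V) (u : V) : Cm h (-u) = -(Cm h u) := by
  have := Cm_rsmul h (-1) u; simpa using this

lemma Am_neg (h : V ≃L[ℝ] V) (u : V) : Am h (-u) = -(Am h u) := by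
  have := Am_rsmul h (-1) u; simpa using this

lemma R1 (h : V ≃L[ℝ] V) (x : V) :
    Cm h (Am h.symm x) = -(Am h (Cm h.symm x)) := by
  set c := Cm h.symm x with hc
  set a := Am h.symm x with ha
  have V1 : Cm h c + Cm h a + Am h c + Am h a = x := by
    have e1 := sumCA h (h.symm x)
    rw [h.apply_symm_apply] at e1
    have e2 : h.symm x = c + a := (sumCA h.symm x).symm
    rw [e2, Cm_add, Am_add] at e1
    linear_combination (norm := module) e1
  have V2 : Cm h c - Cm h a - Am h c + Am h a = x := by
    have e1 := sumCA h (h.symm (Complex.I • x))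
    rw [h.apply_symm_apply] at e1
    have e2 : h.symm (Complex.I • x) = Complex.I • c + -(Complex.I • a) := by
      rw [← sumCA h.symm (Complex.I • x), Cm_I, Am_I]
    rw [e2, Cm_add, Am_add, Cm_I, Am_I] at e1
    have e3 : Cm h (-(Complex.I • a)) = -(Complex.I • Cm h a) := by
      rw [Cm_neg, Cm_I]
    have e4 : Am h (-(Complex.I • a)) = Complex.I • Am h a := by
      rw [Am_neg, Am_I, neg_neg]
    rw [e3, e4] at e1
    have e5 : Complex.I • (Cm h c - Cm h a - Am h c + Am h a) = Complex.I • x := by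
      rw [smul_add, smul_sub, smul_sub]
      linear_combination (norm := module) e1
    have := congrArg (fun v => (-Complex.I) • v) e5
    simpa [smul_smul, Complex.I_mul_I] using this
  have h12 := V1.trans V2.symm
  linear_combination (norm := module) ((2:ℝ)⁻¹ : ℝ) • (V1 - V2)

section Complete
variable [CompleteSpace V]

/-- Multiplication by I as a real CLM. -/
def Jc : V →L[ℝ] V :=
  ContinuousLinearMap.restrictScalars ℝ (Complex.I • (ContinuousLinearMap.id ℂ V))

lemma Jc_apply (x : V) : (Jc : V →L[ℝ] V) x = Complex.I • x := rfl

def CmL (h : V ≃L[ℝ] V) : V →L[ℝ] V :=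
  (2:ℝ)⁻¹ • ((h : V →L[ℝ] V) - Jc.comp ((h : V →L[ℝ] V).comp Jc))

lemma CmL_apply (h : V ≃L[ℝ] V) (x : V) : CmL h x = Cm h x := rfl

def AmL (h : V ≃L[ℝ] V) : V →L[ℝ] V :=
  (2:ℝ)⁻¹ • ((h : V →L[ℝ] V) + Jc.comp ((h : V →L[ℝ] V).comp Jc))

lemma AmL_apply (h : V ≃L[ℝ] V) (x : V) : AmL h x = Am h x := rfl

def CmC (h : V ≃L[ℝ] V) : V →L[ℂ] V where
  toFun := Cm h
  map_add' := Cm_add h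
  map_smul' := Cm_csmul h
  cont := (CmL h).cont.congr (fun x => CmL_apply h x)

lemma CmC_apply (h : V ≃L[ℝ] V) (x : V) : CmC h x = Cm h x := rfl

include symp in
lemma ker_CmC : LinearMap.ker (CmC h : V →ₗ[ℂ] V) = ⊥ := by
  rw [LinearMap.ker_eq_bot']
  intro m hm
  have h1 := norm_le_Cm symp m
  rw [show Cm h m = 0 from hm] at h1
  simpa using norm_le_zero_iff.mp (by simpa using h1)

include symp in
lemma range_CmC : LinearMap.range (CmC h : V →ₗ[ℂ] V) = ⊤ := by
  have anti : AntilipschitzWith 1 (CmC h) :=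
    ContinuousLinearMap.antilipschitz_of_bound (CmC h) (by
      intro x; have h0 := norm_le_Cm symp x; rw [← CmC_apply] at h0; simpa using h0)
  have hcl : IsClosed (Set.range (CmC h)) :=
    anti.isClosed_range (CmC h).uniformContinuous
  have hcl2 : IsClosed ((LinearMap.range (CmC h : V →ₗ[ℂ] V) : Submodule ℂ V) : Set V) := by
    rwa [LinearMap.coe_range]
  haveI : CompleteSpace ((LinearMap.range (CmC h : V →ₗ[ℂ] V) : Submodule ℂ V) : Set V) :=
    hcl2.completeSpace_coe
  rw [← Submodule.orthogonal_eq_bot_iff]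
  rw [Submodule.eq_bot_iff]
  intro z hz
  rw [Submodule.mem_orthogonal] at hz
  have hz' : ∀ y : V, (⟪z, Cm h y⟫ : ℂ) = 0 := by
    intro y
    have := hz (CmC h y) (LinearMap.mem_range_self _ y)
    rw [← inner_conj_symm]
    rw [CmC_apply] at this
    simp [this]
  have hz2 : Cm h.symm z = 0 := by
    have := (adjCm symp z (Cm h.symm z)).trans (hz' (Cm h.symm z))
    exact inner_self_eq_zero.mp this
  have h1 := norm_le_Cm (symp_symm symp) z
  rw [hz2] at h1
  simpa using norm_le_zero_iff.mp (by simpa using h1)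

include symp in
lemma bij_Cm : Function.Bijective (Cm h) := by
  constructor
  · have := LinearMap.ker_eq_bot.mp (ker_CmC symp)
    exact this
  · have := LinearMap.range_eq_top.mp (range_CmC symp)
    exact this

end Complete
end SympAux

end SympAuxSec

open SympAux

/-- For a real-linear symplectic automorphism `g` of the complex Hilbert space `V`,
with complex-linear part `C_g = (g − JgJ)/2` and antilinear part `A_g = (g + JgJ)/2`:
`C_g` is invertible, and `Z_g = C_g⁻¹A_g` is a symmetric antilinear operator of
operator norm strictly less than `1`. -/
theorem symplectic_parts {V : Type}
    [NormedAddCommGroup V] [InnerProductSpace ℂ V] [CompleteSpace V]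
    (g : V ≃L[ℝ] V)
    (hg : ∀ x y : V, (inner ℂ (g x) (g y) : ℂ).im = (inner ℂ x y : ℂ).im)
    (Cg Ag : V → V)
    (hCg : ∀ x : V, Cg x = (2 : ℝ)⁻¹ • (g x - Complex.I • g (Complex.I • x)))
    (hAg : ∀ x : V, Ag x = (2 : ℝ)⁻¹ • (g x + Complex.I • g (Complex.I • x))) :
    Function.Bijective Cg ∧
    ∃ Zg : V →L[ℝ] V,
      (∀ x : V, Cg (Zg x) = Ag x) ∧
      (∀ (c : ℂ) (x : V), Zg (c • x) = conj c • Zg x) ∧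
      (∀ x y : V, (inner ℂ y (Zg x) : ℂ) = inner ℂ x (Zg y)) ∧
      ‖Zg‖ < 1 := by
  have hCg' : Cg = Cm g := funext fun x => hCg x
  have hAg' : Ag = Am g := funext fun x => hAg x
  have symp : ∀ x y : V, (inner ℂ (g x) (g y) : ℂ).im = (inner ℂ x y : ℂ).im := hg
  have symp' := symp_symm symp
  let e : V ≃L[ℂ] V := ContinuousLinearEquiv.ofBijective (CmC g) (ker_CmC symp) (range_CmC symp)
  let Zg : V →L[ℝ] V := ((e.symm : V →L[ℂ] V).restrictScalars ℝ).comp (AmL g)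
  have hZ : ∀ x : V, Zg x = e.symm (Am g x) := fun x => rfl
  have heC : ∀ u : V, Cm g (e.symm u) = u := by
    intro u
    have h1 : (CmC g) (e.symm u) = e (e.symm u) := rfl
    rw [← CmC_apply, h1, e.apply_symm_apply]
  have eSymmC : ∀ u : V, e.symm (Cm g u) = u := by
    intro u
    have h1 : Cm g u = e u := rfl
    rw [h1, e.symm_apply_apply]
  have Zval : ∀ w : V, Zg (Cm g.symm w) = -(Am g.symm w) := by
    intro w
    have hr : Am g (Cm g.symm w) = -(Cm g (Am g.symm w)) := by
      rw [R1 g w, neg_neg]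
    rw [hZ, hr, map_neg, eSymmC]
  refine ⟨by rw [hCg']; exact bij_Cm symp, Zg, ?_, ?_, ?_, ?_⟩
  · intro x
    rw [hCg', hAg', hZ, heC]
  · intro c x
    rw [hZ, hZ, Am_csmul, map_smul]
  · intro x y
    obtain ⟨p, hp⟩ := (bij_Cm symp').2 x
    obtain ⟨q, hq⟩ := (bij_Cm symp').2 y
    rw [← hp, ← hq, Zval p, Zval q, inner_neg_right, inner_neg_right,
      star2 symp' q p]
  · set N : ℝ := ‖(g.symm : V →L[ℝ] V)‖ with hN
    set K : ℝ := max N 1 with hKdef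
    have hK1 : 1 ≤ K := le_max_right _ _
    have hK0 : 0 < K := lt_of_lt_of_le one_pos hK1
    have hKinv : 0 < K⁻¹ := inv_pos.2 hK0
    have hKinv1 : K⁻¹ ≤ 1 := by
      rw [inv_le_one_iff₀]; right; exact hK1
    have hargnn : 0 ≤ 1 - (K⁻¹)^2 := by nlinarith
    have bound1 : ∀ p : V, ‖Cm g.symm p‖ ≤ K * ‖p‖ := by
      intro p
      have hIp : ‖Complex.I • g.symm (Complex.I • p)‖ = ‖g.symm (Complex.I • p)‖ := by
        rw [norm_smul, Complex.norm_I, one_mul]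
      have h1 : ‖Cm g.symm p‖ ≤ (2:ℝ)⁻¹ * (‖g.symm p‖ + ‖g.symm (Complex.I • p)‖) := by
        rw [Cm, norm_smul]
        have : ‖g.symm p - Complex.I • g.symm (Complex.I • p)‖
            ≤ ‖g.symm p‖ + ‖g.symm (Complex.I • p)‖ := by
          refine (norm_sub_le _ _).trans ?_
          rw [hIp]
        have h2 : ‖(2:ℝ)⁻¹‖ = (2:ℝ)⁻¹ := by norm_num
        rw [h2]
        nlinarith [this]
      have h2 : ∀ u : V, ‖g.symm u‖ ≤ N * ‖u‖ := by
        intro u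
        have := (g.symm : V →L[ℝ] V).le_opNorm u
        simpa using this
      have h3 : ‖(Complex.I • p : V)‖ = ‖p‖ := by
        rw [norm_smul, Complex.norm_I, one_mul]
      have h4 := h2 p
      have h5 := h2 (Complex.I • p)
      rw [h3] at h5
      have hNK : N ≤ K := le_max_left _ _
      nlinarith [norm_nonneg p]
    have bound2 : ∀ x : V, ‖Zg x‖^2 ≤ (1 - (K⁻¹)^2) * ‖x‖^2 := by
      intro x
      obtain ⟨p, hp⟩ := (bij_Cm symp').2 x
      have hZx : Zg x = -(Am g.symm p) := by rw [← hp, Zval p]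
      have hn : ‖x‖ ^ 2 = ‖p‖ ^ 2 + ‖Am g.symm p‖ ^ 2 := by
        rw [← hp]; exact normCA symp' p
      have hb : ‖x‖ ≤ K * ‖p‖ := by rw [← hp]; exact bound1 p
      have hb2 : K⁻¹ * ‖x‖ ≤ ‖p‖ := by
        have h := mul_le_mul_of_nonneg_left hb (le_of_lt hKinv)
        rwa [← mul_assoc, inv_mul_cancel₀ (ne_of_gt hK0), one_mul] at h
      have hsq : (K⁻¹ * ‖x‖)^2 ≤ ‖p‖^2 := by
        have h0 : 0 ≤ K⁻¹ * ‖x‖ := mul_nonneg (le_of_lt hKinv) (norm_nonneg x)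
        nlinarith [hb2, norm_nonneg p]
      have hZn : ‖Zg x‖ = ‖Am g.symm p‖ := by rw [hZx, norm_neg]
      rw [hZn]
      nlinarith [hsq]
    have hc0 : 0 ≤ Real.sqrt (1 - (K⁻¹)^2) := Real.sqrt_nonneg _
    have hub : ∀ x : V, ‖Zg x‖ ≤ Real.sqrt (1 - (K⁻¹)^2) * ‖x‖ := by
      intro x
      have h1 : ‖Zg x‖ = Real.sqrt (‖Zg x‖^2) := by
        rw [Real.sqrt_sq (norm_nonneg _)]
      rw [h1]
      have h2 := Real.sqrt_le_sqrt (bound2 x)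
      refine h2.trans ?_
      rw [Real.sqrt_mul hargnn, Real.sqrt_sq (norm_nonneg _)]
    have hnorm : ‖Zg‖ ≤ Real.sqrt (1 - (K⁻¹)^2) :=
      ContinuousLinearMap.opNorm_le_bound Zg hc0 hub
    have hlt : Real.sqrt (1 - (K⁻¹)^2) < 1 := by
      have harg : 1 - (K⁻¹)^2 < 1 := by nlinarith
      calc Real.sqrt (1 - (K⁻¹)^2) < Real.sqrt 1 := Real.sqrt_lt_sqrt hargnn harg
        _ = 1 := Real.sqrt_one
    exact lt_of_le_of_lt hnorm hlt
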